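/- Let K be a field, W a finite-dimensional K-vector space, and l a natural number with l + 1 ≤ dim_K W. Then the K-linear map ⋀^l W → Hom_K(W, ⋀^{l+1} W) sending ω to the linear map (w ↦ ω ∧ w) is injective. (This is the injectivity of the adjunction ⋀^l W → W^∨ ⊗ ⋀^{l+1} W of the wedge product, used in the proof of Lemma 2.2(2).) -/

import Mathlib

variable (K : Type*) [Field K] (W : Type*) [AddCommGroup W] [Module K W]

/-- The image of `ι` lies in the first exterior power. -/
theorem ExteriorAlgebra.ι_mem_one (w : W) : ExteriorAlgebra.ι K w ∈ ⋀[K]^1 W := by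
  rw [exteriorPower, pow_one]
  exact LinearMap.mem_range_self _ w

/-- The wedge pairing `⋀^l W × W → ⋀^(l+1) W`, `(ω, w) ↦ ω ∧ w`, as a bilinear map. -/
noncomputable def wedgeRight (l : ℕ) : ⋀[K]^l W →ₗ[K] W →ₗ[K] ⋀[K]^(l + 1) W :=
  LinearMap.mk₂ K
    (fun ω w => ⟨(ω : ExteriorAlgebra K W) * ExteriorAlgebra.ι K w,
      SetLike.mul_mem_graded ω.2 (ExteriorAlgebra.ι_mem_one K W w)⟩)
    (fun ω₁ ω₂ w => Subtype.ext (by simp [add_mul]))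
    (fun c ω w => Subtype.ext (by simp [smul_mul_assoc]))
    (fun ω w₁ w₂ => Subtype.ext (by simp [mul_add]))
    (fun c ω w => Subtype.ext (by simp [mul_smul_comm]))

private lemma wedge_divisible {n : ℕ} (b : Module.Basis (Fin n) K W) (x : ExteriorAlgebra K W)
    (hx : ∀ w, x * ExteriorAlgebra.ι K w = 0) :
    ∀ k : ℕ, k ≤ n → ∃ y m : ExteriorAlgebra K W, m ∈ ⋀[K]^k W ∧ x = y * m ∧
      ∀ w, (∀ i : Fin n, (i : ℕ) < k → b.coord i w = 0) → y * ExteriorAlgebra.ι K w = 0 := by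
  intro k
  induction k with
  | zero =>
    intro _
    refine ⟨x, 1, ?_, (mul_one x).symm, fun w _ => hx w⟩
    rw [ExteriorAlgebra.exteriorPower, pow_zero]
    exact Submodule.one_le.mp le_rfl
  | succ k ih =>
    intro hk
    obtain ⟨y, m, hm, hxy, hy⟩ := ih (Nat.le_of_succ_le hk)
    set i : Fin n := ⟨k, hk⟩
    set d : Module.Dual K W := b.coord i
    have key : ∀ w, (∀ j : Fin n, (j : ℕ) < k → b.coord j w = 0) →
        d w • y = CliffordAlgebra.contractRight y d * ExteriorAlgebra.ι K w := by
      intro w hw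
      have h0 := CliffordAlgebra.contractRight_mul_ι (Q := (0 : QuadraticForm K W)) (d := d) w y
      rw [hy w hw, map_zero, LinearMap.zero_apply] at h0
      linear_combination (norm := module) -h0
    have hcoord : ∀ j : Fin n, (j : ℕ) < k → b.coord j (b i) = 0 := by
      intro j hj
      rw [Module.Basis.coord_apply, Module.Basis.repr_self, Finsupp.single_apply, if_neg]
      exact fun h => absurd (h ▸ hj) (by simp [i])
    have hde : d (b i) = 1 := by simp [d, Module.Basis.coord_apply, Module.Basis.repr_self]
    have hyd : y = CliffordAlgebra.contractRight y d * ExteriorAlgebra.ι K (b i) := by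
      have := key (b i) hcoord
      rwa [hde, one_smul] at this
    refine ⟨CliffordAlgebra.contractRight y d, ExteriorAlgebra.ι K (b i) * m, ?_, ?_, ?_⟩
    · rw [ExteriorAlgebra.exteriorPower, pow_succ']
      exact Submodule.mul_mem_mul (LinearMap.mem_range_self _ _) hm
    · rw [hxy, ← mul_assoc, ← hyd]
    · intro w hw
      have h1 := key w (fun j hj => hw j (Nat.lt_succ_of_lt hj))
      have h2 : d w = 0 := hw i (Nat.lt_succ_self k)
      rw [h2, zero_smul] at h1
      exact h1.symm

private lemma eq_zero_of_eq_mul_top {l n : ℕ} (hln : l < n) (x : ExteriorAlgebra K W)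
    (hx : x ∈ ⋀[K]^l W) (y m : ExteriorAlgebra K W) (hm : m ∈ ⋀[K]^n W) (h : x = y * m) :
    x = 0 := by
  set 𝒜 : ℕ → Submodule K (ExteriorAlgebra K W) := fun i => ⋀[K]^i W with h𝒜
  have key : ∀ y : ExteriorAlgebra K W,
      (DirectSum.decompose 𝒜 (y * m) l : ExteriorAlgebra K W) = 0 := by
    intro y
    induction y using DirectSum.Decomposition.inductionOn 𝒜 with
    | zero => simp
    | homogeneous z =>
      exact DirectSum.decompose_of_mem_ne 𝒜 (SetLike.mul_mem_graded z.2 hm) (by omega)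
    | add a b ha hb =>
      rw [add_mul, DirectSum.decompose_add, DirectSum.add_apply, Submodule.coe_add, ha, hb,
        add_zero]
  rw [h] at hx ⊢
  rw [← DirectSum.decompose_of_mem_same 𝒜 hx]
  exact key y

/-- The adjunction `⋀^l W → Hom_K(W, ⋀^(l+1) W)` of the wedge pairing, `ω ↦ (w ↦ ω ∧ w)`,
is injective when `W` is finite dimensional over the field `K` and `l + 1 ≤ dim_K W`. -/
theorem wedgeRight_injective [FiniteDimensional K W] (l : ℕ)
    (hl : l + 1 ≤ Module.finrank K W) :
    Function.Injective (wedgeRight K W l) := by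
  rw [injective_iff_map_eq_zero]
  intro ω hω
  have hx : ∀ w, (ω : ExteriorAlgebra K W) * ExteriorAlgebra.ι K w = 0 := by
    intro w
    have : wedgeRight K W l ω w = 0 := by rw [hω]; rfl
    exact congrArg Subtype.val this
  obtain ⟨y, m, hm, hxy, -⟩ := wedge_divisible K W (Module.finBasis K W)
    (ω : ExteriorAlgebra K W) hx (Module.finrank K W) le_rfl
  exact Subtype.ext (eq_zero_of_eq_mul_top K W hl (ω : ExteriorAlgebra K W) ω.2 y m hm hxy)
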